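/- The element y_{n−1}^{−1} x_{n−1} y_{n−1} (product taken in Homeo(C_n) with the convention fg = g∘f) belongs to G_0(n), while the element y_{n−1} x_{n−1} y_{n−1}^{−1} does not belong to yG(n). -/
import Mathlib


namespace LM

/-- Group structure on the self-homeomorphisms of a space, with the convention
`(f * g) ξ = f (g ξ)`.  A product `f₁ f₂ ⋯ f_k` in the paper's convention
(`fg = g ∘ f`) corresponds to `f_k * ⋯ * f₂ * f₁` here. -/
instance homeoGroup {X : Type*} [TopologicalSpace X] : Group (X ≃ₜ X) where
  mul f g := g.trans f
  one := Homeomorph.refl X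
  inv := Homeomorph.symm
  mul_assoc _ _ _ := Homeomorph.ext fun _ => rfl
  one_mul _ := Homeomorph.ext fun _ => rfl
  mul_one _ := Homeomorph.ext fun _ => rfl
  inv_mul_cancel f := Homeomorph.ext fun x => f.symm_apply_apply x

/-- The `n`-adic Cantor set `{0, …, n-1}^ℕ` with the product topology
(`Fin n` being discrete). -/
abbrev C (n : ℕ) : Type := ℕ → Fin n

/-- The group of self-homeomorphisms of the `n`-adic Cantor set. -/
abbrev Γ (n : ℕ) : Type := C n ≃ₜ C n

/-- Prepend a letter to an infinite sequence. -/
def cons {n : ℕ} (a : Fin n) (s : C n) : C n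
  | 0 => a
  | i + 1 => s i

/-- Prepend a finite word to an infinite sequence. -/
def wcons {n : ℕ} (w : List (Fin n)) (s : C n) : C n := w.foldr cons s

/-- The sum of the letters of a finite word. -/
def dsum {n : ℕ} (w : List (Fin n)) : ℕ := (w.map Fin.val).sum

/-- `f` acts as `core` after the prefix `α` and fixes every sequence not beginning
with `α`. -/
def IsPrefixMap {n : ℕ} (α : List (Fin n)) (core : Γ n) (f : Γ n) : Prop :=
  (∀ η, f (wcons α η) = wcons α (core η)) ∧
  (∀ ξ : C n, (∀ η, ξ ≠ wcons α η) → f ξ = ξ)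

/-- The defining equations of the generator `x₀` of the Brown–Thompson group `F(n)`. -/
def IsX0 (n : ℕ) (hn : 2 ≤ n) (f : Γ n) : Prop :=
  (∀ k : Fin n, (k : ℕ) ≤ n - 2 → ∀ η,
    f (cons ⟨0, by omega⟩ (cons k η)) = cons k η) ∧
  (∀ η, f (cons ⟨0, by omega⟩ (cons ⟨n - 1, by omega⟩ η)) =
    cons ⟨n - 1, by omega⟩ (cons ⟨0, by omega⟩ η)) ∧
  (∀ k : Fin n, 1 ≤ (k : ℕ) → (k : ℕ) ≤ n - 2 → ∀ η,
    f (cons k η) = cons ⟨n - 1, by omega⟩ (cons k η)) ∧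
  (∀ η, f (cons ⟨n - 1, by omega⟩ η) =
    cons ⟨n - 1, by omega⟩ (cons ⟨n - 1, by omega⟩ η))

/-- The defining equations of the generator `x_j`, `1 ≤ j ≤ n - 2`. -/
def IsXMid (n : ℕ) (hn : 2 ≤ n) (j : Fin n) (f : Γ n) : Prop :=
  (∀ k : Fin n, (k : ℕ) < (j : ℕ) → ∀ η, f (cons k η) = cons k η) ∧
  (∀ k m : Fin n, (m : ℕ) = (j : ℕ) + (k : ℕ) → (j : ℕ) + (k : ℕ) ≤ n - 2 → ∀ η,
    f (cons j (cons k η)) = cons m η) ∧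
  (∀ k m : Fin n, n - 1 ≤ (j : ℕ) + (k : ℕ) → (m : ℕ) = (j : ℕ) + (k : ℕ) - (n - 1) → ∀ η,
    f (cons j (cons k η)) = cons ⟨n - 1, by omega⟩ (cons m η)) ∧
  (∀ k : Fin n, (j : ℕ) < (k : ℕ) → (k : ℕ) ≤ n - 2 → ∀ η,
    f (cons k η) = cons ⟨n - 1, by omega⟩ (cons k η)) ∧
  (∀ η, f (cons ⟨n - 1, by omega⟩ η) =
    cons ⟨n - 1, by omega⟩ (cons ⟨n - 1, by omega⟩ η))

/-- The defining equations of the generator `x_{n-1}` (in terms of `x₀`). -/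
def IsXLast (n : ℕ) (hn : 2 ≤ n) (x0 f : Γ n) : Prop :=
  (∀ k : Fin n, (k : ℕ) ≤ n - 2 → ∀ η, f (cons k η) = cons k η) ∧
  (∀ η, f (cons ⟨n - 1, by omega⟩ η) = cons ⟨n - 1, by omega⟩ (x0 η))

/-- `x` is the family `x₀, …, x_{n-1}` of generators of the Brown–Thompson group. -/
def IsXFamily (n : ℕ) (hn : 2 ≤ n) (x : Fin n → Γ n) : Prop :=
  IsX0 n hn (x ⟨0, by omega⟩) ∧
  (∀ j : Fin n, 1 ≤ (j : ℕ) → (j : ℕ) ≤ n - 2 → IsXMid n hn j (x j)) ∧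
  IsXLast n hn (x ⟨0, by omega⟩) (x ⟨n - 1, by omega⟩)

/-- The defining (co)recursive equations of the map `y`. -/
def IsY (n : ℕ) (hn : 2 ≤ n) (f : Γ n) : Prop :=
  (∀ ζ, f (cons ⟨0, by omega⟩ (cons ⟨0, by omega⟩ ζ)) = cons ⟨0, by omega⟩ (f ζ)) ∧
  (∀ k : Fin n, 1 ≤ (k : ℕ) → (k : ℕ) ≤ n - 2 → ∀ ζ,
    f (cons ⟨0, by omega⟩ (cons k ζ)) = cons k ζ) ∧
  (∀ k : Fin n, 1 ≤ (k : ℕ) → (k : ℕ) ≤ n - 2 → ∀ ζ,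
    f (cons k ζ) = cons ⟨n - 1, by omega⟩ (cons k ζ)) ∧
  (∀ ζ, f (cons ⟨0, by omega⟩ (cons ⟨n - 1, by omega⟩ ζ)) =
    cons ⟨n - 1, by omega⟩ (cons ⟨0, by omega⟩ (f⁻¹ ζ))) ∧
  (∀ ζ, f (cons ⟨n - 1, by omega⟩ ζ) =
    cons ⟨n - 1, by omega⟩ (cons ⟨n - 1, by omega⟩ (f ζ)))

/-! ### Auxiliary infrastructure -/

section Aux

variable {n : ℕ}

@[simp] lemma cons_zero (a : Fin n) (s : C n) : cons a s 0 = a := rfl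
@[simp] lemma cons_succ (a : Fin n) (s : C n) (i : ℕ) : cons a s (i + 1) = s i := rfl

lemma cons_tail_eq (ξ : C n) : cons (ξ 0) (fun i => ξ (i + 1)) = ξ := by
  funext i; cases i <;> rfl

@[simp] lemma wcons_nil (s : C n) : wcons ([] : List (Fin n)) s = s := rfl
@[simp] lemma wcons_cons (a : Fin n) (w : List (Fin n)) (s : C n) :
    wcons (a :: w) s = cons a (wcons w s) := rfl

lemma wcons_append (u v : List (Fin n)) (s : C n) :
    wcons (u ++ v) s = wcons u (wcons v s) := by
  induction u with
  | nil => rfl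
  | cons a u ih => simp [ih]

lemma wcons_apply (w : List (Fin n)) (s : C n) (i : ℕ) :
    wcons w s i = if h : i < w.length then w.get ⟨i, h⟩ else s (i - w.length) := by
  induction w generalizing i with
  | nil => simp
  | cons a w ih =>
    cases i with
    | zero => simp
    | succ i =>
      rw [wcons_cons, cons_succ, ih]
      by_cases h : i < w.length
      · rw [dif_pos h, dif_pos (by simpa using Nat.succ_lt_succ h)]
        rfl
      · rw [dif_neg h, dif_neg (by simpa using fun hh => h (Nat.lt_of_succ_lt_succ hh))]
        simp [Nat.succ_sub_succ]

/-- The (decidable) property that `ξ` starts with the finite word `w`. -/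
def pfx (w : List (Fin n)) (ξ : C n) : Prop :=
  ∀ i (h : i < w.length), ξ i = w.get ⟨i, h⟩

instance pfx.dec (w : List (Fin n)) (ξ : C n) : Decidable (pfx w ξ) :=
  Nat.decidableBallLT _ _

lemma pfx_wcons (w : List (Fin n)) (η : C n) : pfx w (wcons w η) := by
  intro i h; rw [wcons_apply, dif_pos h]

/-- Drop the first `m` letters. -/
def dropn (m : ℕ) (ξ : C n) : C n := fun i => ξ (i + m)

lemma dropn_wcons (w : List (Fin n)) (η : C n) : dropn w.length (wcons w η) = η := by
  funext i
  rw [dropn, wcons_apply, dif_neg (by omega)]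
  congr 1; omega

lemma wcons_dropn {w : List (Fin n)} {ξ : C n} (h : pfx w ξ) :
    wcons w (dropn w.length ξ) = ξ := by
  funext i
  rw [wcons_apply]
  split
  · exact (h i ‹_›).symm
  · rw [dropn]; congr 1; omega

lemma pfx_iff {w : List (Fin n)} {ξ : C n} : pfx w ξ ↔ ∃ η, ξ = wcons w η :=
  ⟨fun h => ⟨_, (wcons_dropn h).symm⟩, fun ⟨η, hη⟩ => hη ▸ pfx_wcons w η⟩

lemma wcons_right_cancel (w : List (Fin n)) {s t : C n} (h : wcons w s = wcons w t) :
    s = t := by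
  have := congrArg (dropn w.length) h
  rwa [dropn_wcons, dropn_wcons] at this

lemma wcons_ne {α β : List (Fin n)} (i : ℕ) (hα : i < α.length) (hβ : i < β.length)
    (hne : α.get ⟨i, hα⟩ ≠ β.get ⟨i, hβ⟩) (η μ : C n) : wcons α η ≠ wcons β μ := by
  intro h
  have := congrFun h i
  rw [wcons_apply, wcons_apply, dif_pos hα, dif_pos hβ] at this
  exact hne this

/-- The underlying function of a prefix map. -/
def pmFun (w : List (Fin n)) (c : C n → C n) (ξ : C n) : C n :=
  if pfx w ξ then wcons w (c (dropn w.length ξ)) else ξ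

lemma pmFun_wcons (w : List (Fin n)) (c : C n → C n) (η : C n) :
    pmFun w c (wcons w η) = wcons w (c η) := by
  rw [pmFun, if_pos (pfx_wcons w η), dropn_wcons]

lemma pmFun_fix {w : List (Fin n)} {c : C n → C n} {ξ : C n} (h : ¬ pfx w ξ) :
    pmFun w c ξ = ξ := if_neg h

lemma pmFun_inv_comp {w : List (Fin n)} {c d : C n → C n} (hdc : ∀ s, d (c s) = s)
    (ξ : C n) : pmFun w d (pmFun w c ξ) = ξ := by
  by_cases h : pfx w ξ
  · obtain ⟨η, rfl⟩ := pfx_iff.mp h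
    rw [pmFun_wcons, pmFun_wcons, hdc]
  · rw [pmFun_fix h, pmFun_fix h]

lemma isClopen_pfx (w : List (Fin n)) : IsClopen {ξ : C n | pfx w ξ} := by
  have hset : {ξ : C n | pfx w ξ} =
      ⋂ i : Fin w.length, {ξ : C n | ξ i.1 = w.get i} := by
    ext ξ
    simp only [Set.mem_setOf_eq, Set.mem_iInter]
    exact ⟨fun h i => h i.1 i.2, fun h i hi => h ⟨i, hi⟩⟩
  rw [hset]
  constructor
  · refine isClosed_iInter fun i => ?_
    show IsClosed ((fun ξ : C n => ξ i.1) ⁻¹' {w.get i})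
    exact IsClosed.preimage (continuous_apply (i : ℕ)) isClosed_singleton
  · refine isOpen_iInter_of_finite fun i => ?_
    show IsOpen ((fun ξ : C n => ξ i.1) ⁻¹' {w.get i})
    exact IsOpen.preimage (continuous_apply (i : ℕ)) (isOpen_discrete _)

lemma continuous_cons (a : Fin n) : Continuous (cons a : C n → C n) := by
  apply continuous_pi
  intro i
  cases i with
  | zero => exact continuous_const
  | succ i => exact continuous_apply i

lemma continuous_wcons (w : List (Fin n)) : Continuous (wcons w : C n → C n) := by
  induction w with
  | nil => exact continuous_id
  | cons a w ih => exact (continuous_cons a).comp ih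

lemma continuous_dropn (m : ℕ) : Continuous (dropn m : C n → C n) :=
  continuous_pi fun i => continuous_apply (i + m)

lemma continuous_pmFun (w : List (Fin n)) {c : C n → C n} (hc : Continuous c) :
    Continuous (pmFun w c) := by
  unfold pmFun
  apply Continuous.if
  · intro a ha
    rw [(isClopen_pfx w).frontier_eq] at ha
    exact absurd ha (Set.notMem_empty a)
  · exact (continuous_wcons w).comp (hc.comp (continuous_dropn w.length))
  · exact continuous_id

/-- The prefix map `y_w` with core `c`, as a homeomorphism. -/
def pm (w : List (Fin n)) (c : Γ n) : Γ n where
  toFun := pmFun w c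
  invFun := pmFun w c.symm
  left_inv := pmFun_inv_comp c.symm_apply_apply
  right_inv := pmFun_inv_comp c.apply_symm_apply
  continuous_toFun := continuous_pmFun w c.continuous
  continuous_invFun := continuous_pmFun w c.symm.continuous

lemma pm_wcons (w : List (Fin n)) (c : Γ n) (η : C n) :
    pm w c (wcons w η) = wcons w (c η) := pmFun_wcons w _ η

lemma pm_fix {w : List (Fin n)} (c : Γ n) {ξ : C n} (h : ∀ η, ξ ≠ wcons w η) :
    pm w c ξ = ξ := by
  refine pmFun_fix fun hp => ?_
  obtain ⟨η, rfl⟩ := pfx_iff.mp hp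
  exact h η rfl

lemma pm_fix_ne {w : List (Fin n)} (c : Γ n) {ξ : C n} (i : ℕ) (h : i < w.length)
    (hne : ξ i ≠ w.get ⟨i, h⟩) : pm w c ξ = ξ := by
  refine pm_fix c fun η hη => hne ?_
  rw [hη, wcons_apply, dif_pos h]

/-- Group-operation unfolding lemmas for `Γ n`. -/
lemma mulApp (f g : Γ n) (ξ : C n) : (f * g) ξ = f (g ξ) := rfl

lemma invApp (f : Γ n) (ξ : C n) : f⁻¹ (f ξ) = ξ := f.symm_apply_apply ξ

lemma appInv (f : Γ n) (ξ : C n) : f (f⁻¹ ξ) = ξ := f.apply_symm_apply ξ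

lemma invEq {f : Γ n} {ξ ν : C n} (h : f ξ = ν) : f⁻¹ ν = ξ := by
  rw [← h]; exact invApp f ξ

lemma isPrefixMap_pm (w : List (Fin n)) (c : Γ n) : IsPrefixMap w c (pm w c) :=
  ⟨pm_wcons w c, fun _ h => pm_fix c h⟩

lemma eq_pm {w : List (Fin n)} {c f : Γ n} (h : IsPrefixMap w c f) : f = pm w c := by
  apply Homeomorph.ext
  intro ξ
  by_cases hp : pfx w ξ
  · obtain ⟨η, rfl⟩ := pfx_iff.mp hp
    rw [h.1, pm_wcons]
  · have hfix : ∀ η, ξ ≠ wcons w η := fun η hη => hp (hη ▸ pfx_wcons w η)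
    rw [h.2 ξ hfix, pm_fix c hfix]

lemma pm_mul (w : List (Fin n)) (c d : Γ n) : pm w (c * d) = pm w c * pm w d := by
  apply Homeomorph.ext
  intro ξ
  rw [mulApp]
  by_cases hp : pfx w ξ
  · obtain ⟨η, rfl⟩ := pfx_iff.mp hp
    rw [pm_wcons, pm_wcons, pm_wcons, mulApp]
  · have hfix : ∀ η, ξ ≠ wcons w η := fun η hη => hp (hη ▸ pfx_wcons w η)
    rw [pm_fix _ hfix, pm_fix _ hfix, pm_fix _ hfix]

lemma pm_one (w : List (Fin n)) : pm w (1 : Γ n) = 1 := by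
  apply Homeomorph.ext
  intro ξ
  by_cases hp : pfx w ξ
  · obtain ⟨η, rfl⟩ := pfx_iff.mp hp
    rw [pm_wcons]; rfl
  · exact pm_fix _ fun η hη => hp (hη ▸ pfx_wcons w η)

lemma pm_inv (w : List (Fin n)) (c : Γ n) : pm w c⁻¹ = (pm w c)⁻¹ := by
  have h := pm_mul w c⁻¹ c
  rw [inv_mul_cancel, pm_one] at h
  exact eq_inv_of_mul_eq_one_left h.symm

lemma pm_pm (u v : List (Fin n)) (c : Γ n) : pm u (pm v c) = pm (u ++ v) c := by
  apply Homeomorph.ext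
  intro ξ
  by_cases h1 : pfx u ξ
  · obtain ⟨μ, rfl⟩ := pfx_iff.mp h1
    by_cases h2 : pfx v μ
    · obtain ⟨η, rfl⟩ := pfx_iff.mp h2
      rw [pm_wcons, pm_wcons]
      conv_rhs => rw [← wcons_append, pm_wcons]
      rw [wcons_append]
    · have hfix : ∀ η, μ ≠ wcons v η := fun η hη => h2 (hη ▸ pfx_wcons v η)
      rw [pm_wcons, pm_fix _ hfix, pm_fix]
      intro η hη
      rw [wcons_append] at hη
      exact hfix η (wcons_right_cancel u hη)
  · have hfix : ∀ η, ξ ≠ wcons u η := fun η hη => h1 (hη ▸ pfx_wcons u η)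
    have hfix2 : ∀ η, ξ ≠ wcons (u ++ v) η := fun η hη =>
      hfix (wcons v η) (by rw [hη, wcons_append])
    rw [pm_fix _ hfix, pm_fix _ hfix2]

lemma pm_conj {α β : List (Fin n)} (c g : Γ n)
    (hg : ∀ η, g (wcons β η) = wcons α η) : pm β c = g⁻¹ * pm α c * g := by
  apply Homeomorph.ext
  intro ξ
  rw [mulApp, mulApp]
  by_cases h : pfx β ξ
  · obtain ⟨η, rfl⟩ := pfx_iff.mp h
    rw [pm_wcons, hg, pm_wcons, ← hg (c η), invApp]
  · have hβ : ∀ η, ξ ≠ wcons β η := fun η hη => h (hη ▸ pfx_wcons β η)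
    have hα : ∀ η, g ξ ≠ wcons α η := by
      intro η hη
      refine hβ η ?_
      have h2 := congrArg (⇑g⁻¹) hη
      rwa [invApp, ← hg η, invApp] at h2
    rw [pm_fix _ hβ, pm_fix _ hα, invApp]

lemma pm_commute {α β : List (Fin n)} (c d : Γ n)
    (hd : ∀ η μ, wcons α η ≠ wcons β μ) : Commute (pm α c) (pm β d) := by
  have hd' : ∀ μ η, wcons β μ ≠ wcons α η := fun μ η h => hd η μ h.symm
  show pm α c * pm β d = pm β d * pm α c
  apply Homeomorph.ext
  intro ξ
  rw [mulApp, mulApp]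
  by_cases h1 : pfx α ξ
  · obtain ⟨η, rfl⟩ := pfx_iff.mp h1
    rw [pm_fix d (hd η), pm_wcons, pm_fix d (hd (c η))]
  · have hfix : ∀ η, ξ ≠ wcons α η := fun η hη => h1 (hη ▸ pfx_wcons α η)
    by_cases h2 : pfx β ξ
    · obtain ⟨μ, rfl⟩ := pfx_iff.mp h2
      rw [pm_fix c (hd' μ), pm_wcons, pm_fix c (hd' (d μ))]
    · have hfix2 : ∀ μ, ξ ≠ wcons β μ := fun μ hμ => h2 (hμ ▸ pfx_wcons β μ)
      rw [pm_fix d hfix2, pm_fix c hfix, pm_fix d hfix2]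

/-- Repeated prefix letter. -/
def rep (b : Fin n) : ℕ → C n → C n
  | 0, η => η
  | k + 1, η => cons b (rep b k η)

lemma rep_add (b : Fin n) (m k : ℕ) (η : C n) :
    rep b (m + k) η = rep b m (rep b k η) := by
  induction m with
  | zero => rw [Nat.zero_add]; rfl
  | succ m ih =>
    have h : m + 1 + k = (m + k) + 1 := by omega
    rw [h]
    show cons b (rep b (m + k) η) = cons b (rep b m (rep b k η))
    rw [ih]

lemma rep_cons (b : Fin n) (k : ℕ) (η : C n) :
    rep b k (cons b η) = rep b (k + 1) η := by
  rw [rep_add b k 1 η]; rfl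

lemma rep_apply (b : Fin n) (k : ℕ) (η : C n) (i : ℕ) :
    rep b k η i = if i < k then b else η (i - k) := by
  induction k generalizing i with
  | zero => simp [rep]
  | succ k ih =>
    cases i with
    | zero => simp [rep]
    | succ i =>
      show rep b k η i = _
      rw [ih]
      by_cases h : i < k
      · rw [if_pos h, if_pos (by omega)]
      · rw [if_neg h, if_neg (by omega), Nat.succ_sub_succ]

/-- The subgroup of homeomorphisms that are eventually affine at the point `b^∞`. -/
def EA (b : Fin n) : Subgroup (Γ n) where
  carrier := {f | ∃ m m', ∀ η, f (rep b m η) = rep b m' η}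
  one_mem' := ⟨0, 0, fun _ => rfl⟩
  mul_mem' := by
    rintro f g ⟨mf, mf', hf⟩ ⟨mg, mg', hg⟩
    refine ⟨mg + mf, mf' + mg', fun η => ?_⟩
    rw [mulApp, rep_add, hg, ← rep_add, Nat.add_comm mg' mf, rep_add, hf, ← rep_add]
  inv_mem' := by
    rintro f ⟨m, m', hf⟩
    exact ⟨m', m, fun η => by rw [← hf η, invApp]⟩

lemma pm_app0 (c : Γ n) (p : Fin n) (η : C n) :
    pm [p] c (cons p η) = cons p (c η) := pm_wcons [p] c η

lemma pm_app1 (c : Γ n) (p q : Fin n) (η : C n) :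
    pm [p, q] c (cons p (cons q η)) = cons p (cons q (c η)) := pm_wcons [p, q] c η

lemma pm_fix0 {w : List (Fin n)} (c : Γ n) {p b : Fin n} {μ : C n} (hne : b ≠ p) :
    pm (p :: w) c (cons b μ) = cons b μ := pm_fix_ne c 0 (by simp) hne

lemma pm_fix1 {w : List (Fin n)} (c : Γ n) {p q b : Fin n} {μ : C n} (hne : b ≠ q) :
    pm (p :: q :: w) c (cons p (cons b μ)) = cons p (cons b μ) := pm_fix_ne c 1 (by simp) hne

end Aux

theorem conjugate_mem_and_not_mem'
    (n : ℕ) (hn : 2 ≤ n) (x : Fin n → Γ n) (hx : IsXFamily n hn x)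
    (ycore : Γ n) (hy : IsY n hn ycore)
    (y10 : Γ n) (hy10 : IsPrefixMap [⟨n - 1, by omega⟩, ⟨0, by omega⟩] ycore y10)
    (y0 : Γ n) (hy0 : IsPrefixMap [⟨0, by omega⟩] ycore y0)
    (y1 : Γ n) (hy1 : IsPrefixMap [⟨n - 1, by omega⟩] ycore y1)
    (G0 : Subgroup (Γ n)) (hG0 : G0 = Subgroup.closure (Set.range x ∪ {y10}))
    (yG : Subgroup (Γ n)) (hyG : yG = Subgroup.closure (Set.range x ∪ {y10, y0})) :
    y1 * x ⟨n - 1, by omega⟩ * y1⁻¹ ∈ G0 ∧ y1⁻¹ * x ⟨n - 1, by omega⟩ * y1 ∉ yG := by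
  have hx0 := hx.1
  have hxmid := hx.2.1
  have hxlast := hx.2.2
  set aL : Fin n := ⟨n - 1, by omega⟩ with haLd
  set zL : Fin n := ⟨0, by omega⟩ with hzLd
  have hazF : aL ≠ zL := by
    intro hcon
    have h2 : n - 1 = 0 := congrArg Fin.val hcon
    omega
  have hzaF : zL ≠ aL := fun hcon => hazF hcon.symm
  -- evaluation facts
  have ex0_a : ∀ η, x zL (cons aL η) = cons aL (cons aL η) := hx0.2.2.2
  have ex0_00 : ∀ η, x zL (cons zL (cons zL η)) = cons zL η :=
    fun η => hx0.1 zL (Nat.zero_le _) η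
  have ex0_0a : ∀ η, x zL (cons zL (cons aL η)) = cons aL (cons zL η) := hx0.2.1
  have ex0_0mid : ∀ k : Fin n, (k : ℕ) ≤ n - 2 → ∀ η,
      x zL (cons zL (cons k η)) = cons k η := hx0.1
  have ex0_mid : ∀ k : Fin n, 1 ≤ (k : ℕ) → (k : ℕ) ≤ n - 2 → ∀ η,
      x zL (cons k η) = cons aL (cons k η) := hx0.2.2.1
  have exa_a : ∀ η, x aL (cons aL η) = cons aL (x zL η) := hxlast.2
  have exa_low : ∀ k : Fin n, (k : ℕ) ≤ n - 2 → ∀ η, x aL (cons k η) = cons k η := hxlast.1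
  have hyc1 : ∀ ζ, ycore (cons zL (cons zL ζ)) = cons zL (ycore ζ) := hy.1
  have hyc2 : ∀ k : Fin n, 1 ≤ (k : ℕ) → (k : ℕ) ≤ n - 2 → ∀ ζ,
      ycore (cons zL (cons k ζ)) = cons k ζ := hy.2.1
  have hyc3 : ∀ k : Fin n, 1 ≤ (k : ℕ) → (k : ℕ) ≤ n - 2 → ∀ ζ,
      ycore (cons k ζ) = cons aL (cons k ζ) := hy.2.2.1
  have hyc4 : ∀ ζ, ycore (cons zL (cons aL ζ)) = cons aL (cons zL (ycore⁻¹ ζ)) := hy.2.2.2.1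
  have hyc5 : ∀ ζ, ycore (cons aL ζ) = cons aL (cons aL (ycore ζ)) := hy.2.2.2.2
  -- identification of the given maps as prefix maps
  have hA : x aL = pm [aL] (x zL) := by
    apply eq_pm
    constructor
    · intro η
      exact exa_a η
    · intro ξ hξ
      have h0 : ξ 0 ≠ aL := by
        intro hcon
        apply hξ (fun i => ξ (i + 1))
        conv_lhs => rw [← cons_tail_eq ξ, hcon]
        rfl
      have hv : (ξ 0 : ℕ) ≤ n - 2 := by
        have h1 := (ξ 0).isLt
        have h2 : (ξ 0 : ℕ) ≠ n - 1 := fun hcon => h0 (Fin.ext hcon)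
        omega
      conv_lhs => rw [← cons_tail_eq ξ]
      rw [exa_low _ hv, cons_tail_eq]
  have hy1pm : y1 = pm [aL] ycore := eq_pm hy1
  have hy10pm : y10 = pm [aL, zL] ycore := eq_pm hy10
  -- the base relation y = x₀ y₀ y_{a0}⁻¹ y_{aa}
  have RB : ycore = pm [aL, aL] ycore * (pm [aL, zL] ycore)⁻¹ * pm [zL] ycore * x zL := by
    apply Homeomorph.ext
    intro ξ
    rw [mulApp, mulApp, mulApp, ← pm_inv]
    obtain ⟨k, t, rfl⟩ : ∃ k t, ξ = cons k t :=
      ⟨ξ 0, fun i => ξ (i + 1), (cons_tail_eq ξ).symm⟩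
    rcases eq_or_ne k zL with rfl | hk0
    · obtain ⟨k2, t2, rfl⟩ : ∃ k2 t2, t = cons k2 t2 :=
        ⟨t 0, fun i => t (i + 1), (cons_tail_eq t).symm⟩
      rcases eq_or_ne k2 zL with rfl | hk20
      · rw [hyc1, ex0_00, pm_app0, pm_fix0 _ hzaF, pm_fix0 _ hzaF]
      · rcases eq_or_ne k2 aL with rfl | hk2a
        · rw [hyc4, ex0_0a, pm_fix0 _ hazF, pm_app1, pm_fix1 _ hzaF]
        · have h1 : 1 ≤ (k2 : ℕ) := by
            have hne : (k2 : ℕ) ≠ 0 := fun hcon => hk20 (Fin.ext hcon)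
            omega
          have h2 : (k2 : ℕ) ≤ n - 2 := by
            have hlt := k2.isLt
            have hne : (k2 : ℕ) ≠ n - 1 := fun hcon => hk2a (Fin.ext hcon)
            omega
          rw [hyc2 k2 h1 h2, ex0_0mid k2 h2, pm_fix0 _ hk20, pm_fix0 _ hk2a,
            pm_fix0 _ hk2a]
    · rcases eq_or_ne k aL with rfl | hka
      · rw [hyc5, ex0_a, pm_fix0 _ hazF, pm_fix1 _ hazF, pm_app1]
      · have h1 : 1 ≤ (k : ℕ) := by
          have hne : (k : ℕ) ≠ 0 := fun hcon => hk0 (Fin.ext hcon)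
          omega
        have h2 : (k : ℕ) ≤ n - 2 := by
          have hlt := k.isLt
          have hne : (k : ℕ) ≠ n - 1 := fun hcon => hka (Fin.ext hcon)
          omega
        rw [hyc3 k h1 h2, ex0_mid k h1 h2, pm_fix0 _ hazF, pm_fix1 _ hk0, pm_fix1 _ hka]
  -- localizations of the base relation
  have hy1ex : y1 = pm [aL, aL, aL] ycore * (pm [aL, aL, zL] ycore)⁻¹ *
      pm [aL, zL] ycore * pm [aL] (x zL) := by
    rw [hy1pm]
    conv_lhs => rw [RB]
    rw [pm_mul, pm_mul, pm_mul, pm_inv, pm_pm, pm_pm, pm_pm]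
    rfl
  have r4 : pm [aL, aL] ycore = pm [aL, aL, aL, aL] ycore *
      (pm [aL, aL, aL, zL] ycore)⁻¹ * pm [aL, aL, zL] ycore * pm [aL, aL] (x zL) := by
    conv_lhs => rw [RB]
    rw [pm_mul, pm_mul, pm_mul, pm_inv, pm_pm, pm_pm, pm_pm]
    rfl
  -- conjugation relations
  have hgA1 : ∀ η, pm [aL] (x zL) (wcons [aL, zL, zL] η) = wcons [aL, zL] η := fun η => by
    show pm [aL] (x zL) (cons aL (cons zL (cons zL η))) = cons aL (cons zL η)
    rw [pm_app0, ex0_00]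
  have hgA2 : ∀ η, pm [aL] (x zL) (wcons [aL, zL, aL] η) = wcons [aL, aL, zL] η := fun η => by
    show pm [aL] (x zL) (cons aL (cons zL (cons aL η))) = cons aL (cons aL (cons zL η))
    rw [pm_app0, ex0_0a]
  have hgA3 : ∀ η, pm [aL] (x zL) (wcons [aL, aL] η) = wcons [aL, aL, aL] η := fun η => by
    show pm [aL] (x zL) (cons aL (cons aL η)) = cons aL (cons aL (cons aL η))
    rw [pm_app0, ex0_a]
  have hgA4 : ∀ η, pm [aL] (x zL) (wcons [aL, aL, zL] η) = wcons [aL, aL, aL, zL] η :=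
    fun η => hgA3 (cons zL η)
  have hgAA : ∀ η, pm [aL, aL] (x zL) (wcons [aL, aL, aL] η) = wcons [aL, aL, aL, aL] η :=
    fun η => by
    show pm [aL, aL] (x zL) (cons aL (cons aL (cons aL η))) =
      cons aL (cons aL (cons aL (cons aL η)))
    rw [pm_app1, ex0_a]
  have hg01 : ∀ η, x zL (wcons [aL, zL] η) = wcons [aL, aL, zL] η :=
    fun η => ex0_a (cons zL η)
  have hg02 : ∀ η, x zL (wcons [aL] η) = wcons [aL, aL] η := fun η => ex0_a η
  have r1 : pm [aL, zL, zL] ycore =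
      (pm [aL] (x zL))⁻¹ * pm [aL, zL] ycore * pm [aL] (x zL) := pm_conj ycore _ hgA1
  have r2 : pm [aL, zL, aL] ycore =
      (pm [aL] (x zL))⁻¹ * pm [aL, aL, zL] ycore * pm [aL] (x zL) := pm_conj ycore _ hgA2
  have r3 : pm [aL, aL] ycore =
      (pm [aL] (x zL))⁻¹ * pm [aL, aL, aL] ycore * pm [aL] (x zL) := pm_conj ycore _ hgA3
  have r7 : pm [aL, aL, zL] ycore =
      (pm [aL] (x zL))⁻¹ * pm [aL, aL, aL, zL] ycore * pm [aL] (x zL) := pm_conj ycore _ hgA4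
  have r5 : pm [aL, aL, aL] ycore =
      (pm [aL, aL] (x zL))⁻¹ * pm [aL, aL, aL, aL] ycore * pm [aL, aL] (x zL) :=
    pm_conj ycore _ hgAA
  have k1 : pm [aL, zL] ycore = (x zL)⁻¹ * pm [aL, aL, zL] ycore * x zL :=
    pm_conj ycore _ hg01
  have k6 : pm [aL] (x zL) = (x zL)⁻¹ * pm [aL, aL] (x zL) * x zL :=
    pm_conj (x zL) _ hg02
  -- commutation relations
  have c1 : Commute (pm [aL, aL, aL] ycore) (pm [aL, aL, zL] ycore) :=
    pm_commute _ _ (wcons_ne 2 (by simp) (by simp) hazF)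
  have c2 : Commute (pm [aL, aL, aL] ycore) (pm [aL, zL] ycore) :=
    pm_commute _ _ (wcons_ne 1 (by simp) (by simp) hazF)
  have c3 : Commute (pm [aL, aL, aL] ycore) (pm [aL, zL, zL] ycore) :=
    pm_commute _ _ (wcons_ne 1 (by simp) (by simp) hazF)
  have c4 : Commute (pm [aL, aL, aL] ycore) (pm [aL, zL, aL] ycore) :=
    pm_commute _ _ (wcons_ne 1 (by simp) (by simp) hazF)
  have c5 : Commute (pm [aL, aL, aL, aL] ycore) (pm [aL, aL, zL] ycore) :=
    pm_commute _ _ (wcons_ne 2 (by simp) (by simp) hazF)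
  have c6 : Commute (pm [aL, aL, aL, aL] ycore) (pm [aL, aL, aL, zL] ycore) :=
    pm_commute _ _ (wcons_ne 3 (by simp) (by simp) hazF)
  -- the key pocket identity
  have hc : pm [aL, aL] (x zL) * (pm [aL, aL, aL] ycore)⁻¹ =
      (pm [aL, aL, aL, aL] ycore)⁻¹ * pm [aL, aL] (x zL) := by
    rw [r5]; group
  have hcm : Commute (pm [aL, aL, aL, aL] ycore)⁻¹
      ((pm [aL, aL, aL, zL] ycore)⁻¹ * pm [aL, aL, zL] ycore) :=
    Commute.mul_right (c6.inv_left.inv_right) (c5.inv_left)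
  have hV : pm [aL, aL] ycore * (pm [aL, aL, aL] ycore)⁻¹ =
      (pm [aL, aL, aL, zL] ycore)⁻¹ * pm [aL, aL, zL] ycore * pm [aL, aL] (x zL) := by
    calc pm [aL, aL] ycore * (pm [aL, aL, aL] ycore)⁻¹
        = pm [aL, aL, aL, aL] ycore *
            (((pm [aL, aL, aL, zL] ycore)⁻¹ * pm [aL, aL, zL] ycore) *
              (pm [aL, aL] (x zL) * (pm [aL, aL, aL] ycore)⁻¹)) := by rw [r4]; group
      _ = pm [aL, aL, aL, aL] ycore *
            (((pm [aL, aL, aL, zL] ycore)⁻¹ * pm [aL, aL, zL] ycore) *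
              ((pm [aL, aL, aL, aL] ycore)⁻¹ * pm [aL, aL] (x zL))) := by rw [hc]
      _ = pm [aL, aL, aL, aL] ycore *
            ((((pm [aL, aL, aL, zL] ycore)⁻¹ * pm [aL, aL, zL] ycore) *
              (pm [aL, aL, aL, aL] ycore)⁻¹) * pm [aL, aL] (x zL)) := by group
      _ = pm [aL, aL, aL, aL] ycore *
            (((pm [aL, aL, aL, aL] ycore)⁻¹ *
              ((pm [aL, aL, aL, zL] ycore)⁻¹ * pm [aL, aL, zL] ycore)) *
              pm [aL, aL] (x zL)) := by rw [← hcm.eq]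
      _ = (pm [aL, aL, aL, zL] ycore)⁻¹ * pm [aL, aL, zL] ycore * pm [aL, aL] (x zL) := by
            group
  have hcomm : Commute (pm [aL, aL, aL] ycore)⁻¹
      ((pm [aL, zL, aL] ycore)⁻¹ * pm [aL, zL, zL] ycore * (pm [aL, zL] ycore)⁻¹ *
        pm [aL, aL, zL] ycore) :=
    Commute.mul_right (Commute.mul_right (Commute.mul_right
      (c4.inv_left.inv_right) (c3.inv_left)) (c2.inv_left.inv_right)) (c1.inv_left)
  have key : y1 * x aL * y1⁻¹ =
      pm [aL] (x zL) * (pm [aL, aL, aL, zL] ycore)⁻¹ * pm [aL, aL, zL] ycore *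
        pm [aL, aL] (x zL) * (pm [aL, zL, aL] ycore)⁻¹ * pm [aL, zL, zL] ycore *
        (pm [aL, zL] ycore)⁻¹ * pm [aL, aL, zL] ycore := by
    calc y1 * x aL * y1⁻¹
        = pm [aL] (x zL) * pm [aL, aL] ycore *
            ((pm [aL, zL, aL] ycore)⁻¹ * pm [aL, zL, zL] ycore * (pm [aL, zL] ycore)⁻¹ *
              pm [aL, aL, zL] ycore * (pm [aL, aL, aL] ycore)⁻¹) := by
          rw [hy1ex, hA, r1, r2, r3]; group
      _ = pm [aL] (x zL) * pm [aL, aL] ycore *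
            ((pm [aL, aL, aL] ycore)⁻¹ *
              ((pm [aL, zL, aL] ycore)⁻¹ * pm [aL, zL, zL] ycore * (pm [aL, zL] ycore)⁻¹ *
                pm [aL, aL, zL] ycore)) := by rw [← hcomm.eq]
      _ = pm [aL] (x zL) * (pm [aL, aL] ycore * (pm [aL, aL, aL] ycore)⁻¹) *
            ((pm [aL, zL, aL] ycore)⁻¹ * pm [aL, zL, zL] ycore * (pm [aL, zL] ycore)⁻¹ *
              pm [aL, aL, zL] ycore) := by group
      _ = pm [aL] (x zL) *
            ((pm [aL, aL, aL, zL] ycore)⁻¹ * pm [aL, aL, zL] ycore * pm [aL, aL] (x zL)) *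
            ((pm [aL, zL, aL] ycore)⁻¹ * pm [aL, zL, zL] ycore * (pm [aL, zL] ycore)⁻¹ *
              pm [aL, aL, zL] ycore) := by rw [hV]
      _ = _ := by group
  -- membership facts
  have hx0mem : x zL ∈ Subgroup.closure (Set.range x ∪ {y10}) :=
    Subgroup.subset_closure (Or.inl ⟨zL, rfl⟩)
  have hAmem : pm [aL] (x zL) ∈ Subgroup.closure (Set.range x ∪ {y10}) := by
    rw [← hA]
    exact Subgroup.subset_closure (Or.inl ⟨aL, rfl⟩)
  have hYa0mem : pm [aL, zL] ycore ∈ Subgroup.closure (Set.range x ∪ {y10}) := by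
    rw [← hy10pm]
    exact Subgroup.subset_closure (Or.inr rfl)
  have hYaa0mem : pm [aL, aL, zL] ycore ∈ Subgroup.closure (Set.range x ∪ {y10}) := by
    have h : pm [aL, aL, zL] ycore = x zL * pm [aL, zL] ycore * (x zL)⁻¹ := by
      rw [k1]; group
    rw [h]
    exact mul_mem (mul_mem hx0mem hYa0mem) (inv_mem hx0mem)
  have hAAmem : pm [aL, aL] (x zL) ∈ Subgroup.closure (Set.range x ∪ {y10}) := by
    have h : pm [aL, aL] (x zL) = x zL * pm [aL] (x zL) * (x zL)⁻¹ := by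
      rw [k6]; group
    rw [h]
    exact mul_mem (mul_mem hx0mem hAmem) (inv_mem hx0mem)
  have hYa00mem : pm [aL, zL, zL] ycore ∈ Subgroup.closure (Set.range x ∪ {y10}) := by
    rw [r1]
    exact mul_mem (mul_mem (inv_mem hAmem) hYa0mem) hAmem
  have hYa0amem : pm [aL, zL, aL] ycore ∈ Subgroup.closure (Set.range x ∪ {y10}) := by
    rw [r2]
    exact mul_mem (mul_mem (inv_mem hAmem) hYaa0mem) hAmem
  have hYaaa0mem : pm [aL, aL, aL, zL] ycore ∈ Subgroup.closure (Set.range x ∪ {y10}) := by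
    have h : pm [aL, aL, aL, zL] ycore =
        pm [aL] (x zL) * pm [aL, aL, zL] ycore * (pm [aL] (x zL))⁻¹ := by
      rw [r7]; group
    rw [h]
    exact mul_mem (mul_mem hAmem hYaa0mem) (inv_mem hAmem)
  constructor
  · show y1 * x aL * y1⁻¹ ∈ G0
    rw [key, hG0]
    exact mul_mem (mul_mem (mul_mem (mul_mem (mul_mem (mul_mem (mul_mem hAmem
      (inv_mem hYaaa0mem)) hYaa0mem) hAAmem) (inv_mem hYa0amem)) hYa00mem)
      (inv_mem hYa0mem)) hYaa0mem
  · show y1⁻¹ * x aL * y1 ∉ yG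
    intro hmem
    -- further evaluation facts
    have y1app : ∀ ν, y1 (cons aL ν) = cons aL (ycore ν) := fun ν => hy1.1 ν
    have y1invApp : ∀ ν, y1⁻¹ (cons aL ν) = cons aL (ycore⁻¹ ν) := fun ν =>
      invEq (by rw [y1app, appInv])
    have P1 : ∀ (m : ℕ) (θ : C n), ycore (rep aL m θ) = rep aL (2 * m) (ycore θ) := by
      intro m
      induction m with
      | zero => intro θ; rfl
      | succ m ih =>
        intro θ
        show ycore (cons aL (rep aL m θ)) = _
        rw [hyc5, ih]
        have h2 : 2 * (m + 1) = (2 * m + 1) + 1 := by ring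
        rw [h2]
        rfl
    have P4 : ∀ (m : ℕ) (ν : C n), ycore⁻¹ (rep aL (2 * m) ν) = rep aL m (ycore⁻¹ ν) :=
      fun m ν => invEq (by rw [P1, appInv])
    have P3 : ∀ ρ, ycore⁻¹ (cons zL ρ) = cons zL (cons zL (ycore⁻¹ ρ)) := fun ρ =>
      invEq (by rw [hyc1, appInv])
    have FORM : ∀ (m : ℕ) (ζ : C n),
        (y1⁻¹ * x aL * y1) (rep aL (m + 1) (cons zL (cons aL ζ))) =
          rep aL (m + 2) (cons zL (cons zL (ycore⁻¹ (ycore⁻¹ ζ)))) := by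
      intro m ζ
      have h1 : y1 (rep aL (m + 1) (cons zL (cons aL ζ))) =
          rep aL (2 * m + 2) (cons zL (ycore⁻¹ ζ)) := by
        show y1 (cons aL (rep aL m (cons zL (cons aL ζ)))) = _
        rw [y1app, P1, hyc4, rep_cons]
        rfl
      have h2 : x aL (rep aL (2 * m + 2) (cons zL (ycore⁻¹ ζ))) =
          rep aL (2 * m + 3) (cons zL (ycore⁻¹ ζ)) := by
        show x aL (cons aL (rep aL (2 * m + 1) (cons zL (ycore⁻¹ ζ)))) = _
        rw [exa_a]
        show cons aL (x zL (cons aL (rep aL (2 * m) (cons zL (ycore⁻¹ ζ))))) = _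
        rw [ex0_a]
        rfl
      have h3 : y1⁻¹ (rep aL (2 * m + 3) (cons zL (ycore⁻¹ ζ))) =
          rep aL (m + 2) (cons zL (cons zL (ycore⁻¹ (ycore⁻¹ ζ)))) := by
        show y1⁻¹ (cons aL (rep aL (2 * m + 2) (cons zL (ycore⁻¹ ζ)))) = _
        rw [y1invApp]
        have h4 : 2 * m + 2 = 2 * (m + 1) := by ring
        rw [h4, P4, P3]
        rfl
      calc (y1⁻¹ * x aL * y1) (rep aL (m + 1) (cons zL (cons aL ζ)))
          = y1⁻¹ (x aL (y1 (rep aL (m + 1) (cons zL (cons aL ζ))))) := rfl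
        _ = rep aL (m + 2) (cons zL (cons zL (ycore⁻¹ (ycore⁻¹ ζ)))) := by
            rw [h1, h2, h3]
    -- yG is contained in the eventually-affine subgroup
    have hsub : yG ≤ EA aL := by
      rw [hyG]
      refine (Subgroup.closure_le _).mpr ?_
      rintro f (⟨k, rfl⟩ | hf)
      · show ∃ m m', ∀ η, x k (rep aL m η) = rep aL m' η
        by_cases hk0 : (k : ℕ) = 0
        · have hk : k = zL := Fin.ext hk0
          subst hk
          exact ⟨1, 2, fun η => ex0_a η⟩
        · by_cases hka : (k : ℕ) = n - 1
          · have hk : k = aL := Fin.ext hka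
            subst hk
            refine ⟨2, 3, fun η => ?_⟩
            show x aL (cons aL (cons aL (rep aL 0 η))) = _
            rw [exa_a, ex0_a]
            rfl
          · have h1 : 1 ≤ (k : ℕ) := by omega
            have h2 : (k : ℕ) ≤ n - 2 := by
              have := k.isLt
              omega
            exact ⟨1, 2, fun η => (hxmid k h1 h2).2.2.2.2 η⟩
      · simp only [Set.mem_insert_iff, Set.mem_singleton_iff] at hf
        rcases hf with rfl | rfl
        · show ∃ m m', ∀ η, f (rep aL m η) = rep aL m' η
          exact ⟨2, 2, fun η => hy10.2 _ (fun μ hμ => hazF (congrFun hμ 1))⟩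
        · show ∃ m m', ∀ η, f (rep aL m η) = rep aL m' η
          exact ⟨1, 1, fun η => hy0.2 _ (fun μ hμ => hazF (congrFun hμ 0))⟩
    obtain ⟨m, m', hEA⟩ :
        ∃ m m', ∀ η, (y1⁻¹ * x aL * y1) (rep aL m η) = rep aL m' η := hsub hmem
    have h := hEA (cons aL (cons zL (cons aL (fun _ => zL))))
    rw [rep_cons, rep_cons, FORM] at h
    rcases lt_trichotomy (m' + 1) (m + 2) with hlt | heqm | hgt
    · have h1 := congrFun h (m' + 1)
      rw [rep_apply, rep_apply, if_pos hlt, if_neg (lt_irrefl _), Nat.sub_self] at h1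
      exact hazF h1
    · rw [← heqm] at h
      have h1 := congrFun h (m' + 2)
      rw [rep_apply, rep_apply, if_neg (by omega), if_neg (by omega)] at h1
      have hidx : m' + 2 - (m' + 1) = 1 := by omega
      rw [hidx] at h1
      exact hzaF h1
    · have h1 := congrFun h (m + 2)
      rw [rep_apply, rep_apply, if_neg (lt_irrefl _), if_pos hgt, Nat.sub_self] at h1
      exact hzaF h1


end LM
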